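/- For an l-periodic AR(2), the determinant over n+1 periods satisfies the recursion ξ_{t,(n+1)l} = ξ_{t,nl}·ξ_{t,l} + φ₂(t-nl+1)·ξ_{t,nl-1}·ξ_{t-1,l-1}. -/
import Mathlib

section Aux

variable (φ₁ φ₂ : ℤ → ℝ) (ξ : ℤ → ℤ → ℝ)

private lemma xi_split
    (hξ0 : ∀ t, ξ t 0 = 1) (hξm1 : ∀ t, ξ t (-1) = 0)
    (hξrec : ∀ t i : ℤ, 1 ≤ i →
      ξ t i = φ₁ t * ξ (t - 1) (i - 1) + φ₂ t * ξ (t - 2) (i - 2)) :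
    ∀ k : ℕ, ∀ t : ℤ, ∀ m : ℕ,
      ξ t ((m : ℤ) + k) =
        ξ t k * ξ (t - k) m
          + φ₂ (t - k + 1) * ξ t ((k : ℤ) - 1) * ξ (t - k - 1) ((m : ℤ) - 1) := by
  intro k
  induction k using Nat.strong_induction_on with
  | _ k ih =>
    match k with
    | 0 =>
      intro t m
      simp [hξ0, hξm1]
    | 1 =>
      intro t m
      have h1 := hξrec t ((m : ℤ) + 1) (by omega)
      rw [show (m:ℤ) + 1 - 1 = (m:ℤ) by ring, show (m:ℤ) + 1 - 2 = (m:ℤ) - 1 by ring] at h1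
      have h2 : ξ t 1 = φ₁ t := by
        have := hξrec t 1 le_rfl
        simp [hξ0, hξm1] at this
        simpa using this
      push_cast
      rw [h1, h2, show t - 1 + 1 = t by ring, hξ0, show t - 1 - 1 = t - 2 by ring]
      ring
    | (k + 2) =>
      intro t m
      have hrec := hξrec t ((m : ℤ) + ((k:ℤ) + 2)) (by omega)
      rw [show (m:ℤ) + ((k:ℤ) + 2) - 1 = (m:ℤ) + ((k:ℤ) + 1) by ring,
          show (m:ℤ) + ((k:ℤ) + 2) - 2 = (m:ℤ) + (k:ℤ) by ring] at hrec
      have ih1 := ih (k + 1) (by omega) (t - 1) m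
      have ih2 := ih k (by omega) (t - 2) m
      have hk2 := hξrec t ((k : ℤ) + 2) (by omega)
      rw [show (k:ℤ) + 2 - 1 = (k:ℤ) + 1 by ring, show (k:ℤ) + 2 - 2 = (k:ℤ) by ring] at hk2
      have hk1 := hξrec t ((k : ℤ) + 1) (by omega)
      rw [show (k:ℤ) + 1 - 1 = (k:ℤ) by ring, show (k:ℤ) + 1 - 2 = (k:ℤ) - 1 by ring] at hk1
      push_cast at ih1 ih2 ⊢
      rw [hrec, ih1, ih2, show ((k:ℤ) + 2) - 1 = (k:ℤ) + 1 by ring, hk2, hk1]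
      ring_nf

private lemma xi_periodic (l : ℕ)
    (hper1 : ∀ s : ℤ, φ₁ (s + (l : ℤ)) = φ₁ s)
    (hper2 : ∀ s : ℤ, φ₂ (s + (l : ℤ)) = φ₂ s)
    (hξ0 : ∀ t, ξ t 0 = 1) (hξm1 : ∀ t, ξ t (-1) = 0)
    (hξrec : ∀ t i : ℤ, 1 ≤ i →
      ξ t i = φ₁ t * ξ (t - 1) (i - 1) + φ₂ t * ξ (t - 2) (i - 2)) :
    ∀ i : ℕ, ∀ t : ℤ, ξ (t + l) i = ξ t i := by
  intro i
  induction i using Nat.strong_induction_on with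
  | _ i ih =>
    match i with
    | 0 => intro t; simp [hξ0]
    | 1 =>
      intro t
      have h1 : ∀ s : ℤ, ξ s 1 = φ₁ s := by
        intro s
        have := hξrec s 1 le_rfl
        simp [hξ0, hξm1] at this
        simpa using this
      push_cast
      rw [h1, h1, hper1]
    | (i + 2) =>
      intro t
      have e1 := hξrec (t + l) ((i : ℤ) + 2) (by omega)
      have e2 := hξrec t ((i : ℤ) + 2) (by omega)
      push_cast
      rw [e1, e2,
        show t + (l:ℤ) - 1 = (t - 1) + l by ring,
        show t + (l:ℤ) - 2 = (t - 2) + l by ring,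
        show (i:ℤ) + 2 - 1 = ((i + 1 : ℕ) : ℤ) by push_cast; ring,
        show (i:ℤ) + 2 - 2 = ((i : ℕ) : ℤ) by ring,
        ih (i + 1) (by omega) (t - 1), ih i (by omega) (t - 2), hper1, hper2]

private lemma xi_periodic_mul (l : ℕ)
    (hper1 : ∀ s : ℤ, φ₁ (s + (l : ℤ)) = φ₁ s)
    (hper2 : ∀ s : ℤ, φ₂ (s + (l : ℤ)) = φ₂ s)
    (hξ0 : ∀ t, ξ t 0 = 1) (hξm1 : ∀ t, ξ t (-1) = 0)
    (hξrec : ∀ t i : ℤ, 1 ≤ i →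
      ξ t i = φ₁ t * ξ (t - 1) (i - 1) + φ₂ t * ξ (t - 2) (i - 2)) :
    ∀ n : ℕ, ∀ t : ℤ, ∀ i : ℕ, ξ (t - (n : ℤ) * l) i = ξ t i := by
  intro n
  induction n with
  | zero => intro t i; norm_num
  | succ n ihn =>
    intro t i
    have h := xi_periodic φ₁ φ₂ ξ l hper1 hper2 hξ0 hξm1 hξrec i (t - ((n : ℤ) + 1) * l)
    rw [show t - ((n : ℤ) + 1) * l + l = t - (n : ℤ) * l by ring] at h
    have h2 := h.symm.trans (ihn t i)
    push_cast
    exact h2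

end Aux

/-- Eq. (B.5) of the paper: for an `l`-periodic AR(2), the Green-function
determinants over `n+1` periods satisfy
`ξ_{t,(n+1)l} = ξ_{t,nl}·ξ_{t,l} + φ₂(t-nl+1)·ξ_{t,nl-1}·ξ_{t-1,l-1}`. -/
theorem periodic_xi_recursion (φ₁ φ₂ : ℤ → ℝ) (ξ : ℤ → ℤ → ℝ) (l : ℕ) (hl : 1 ≤ l)
    (hper1 : ∀ s : ℤ, φ₁ (s + (l : ℤ)) = φ₁ s)
    (hper2 : ∀ s : ℤ, φ₂ (s + (l : ℤ)) = φ₂ s)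
    (hξ0 : ∀ t, ξ t 0 = 1) (hξm1 : ∀ t, ξ t (-1) = 0)
    (hξrec : ∀ t i : ℤ, 1 ≤ i →
      ξ t i = φ₁ t * ξ (t - 1) (i - 1) + φ₂ t * ξ (t - 2) (i - 2))
    (t : ℤ) (n : ℕ) :
    ξ t (((n : ℤ) + 1) * l) =
      ξ t ((n : ℤ) * l) * ξ t l
        + φ₂ (t - (n : ℤ) * l + 1) * ξ t ((n : ℤ) * l - 1) * ξ (t - 1) ((l : ℤ) - 1) := by
  have hsplit := xi_split φ₁ φ₂ ξ hξ0 hξm1 hξrec (n * l) t l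
  have hP1 := xi_periodic_mul φ₁ φ₂ ξ l hper1 hper2 hξ0 hξm1 hξrec n t l
  have hP2 := xi_periodic_mul φ₁ φ₂ ξ l hper1 hper2 hξ0 hξm1 hξrec n (t - 1) (l - 1)
  have hcast : ((l - 1 : ℕ) : ℤ) = (l : ℤ) - 1 := by omega
  have harg2 : t - 1 - (n : ℤ) * l = t - (n : ℤ) * l - 1 := by ring
  rw [hcast, harg2] at hP2
  push_cast at hsplit hP1 ⊢
  rw [show ((n:ℤ) + 1) * l = (l : ℤ) + (n : ℤ) * l by ring, hsplit, hP1, hP2]
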